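/- arXiv:2510.21294 — 2 statements merged into one kernel-verified Lean document; each statement's English description precedes it below -/
import Mathlib

section
/- For a continuously differentiable signal x : ℝ → ℂ, the phasors satisfy the differential relation d/dt X_k(t) = Y_k(t) − j k ω X_k(t), where Y_k is the k-th phasor of the derivative ẋ. In particular, if ẋ(t) = f(t) then Ẋ_k = F_k − jkω X_k with F = phasors of f. -/
open MeasureTheory intervalIntegral

/-- Sliding Fourier (phasor) coefficient. -/
noncomputable def phasor (T : ℝ) (x : ℝ → ℂ) (k : ℤ) (t : ℝ) : ℂ :=
  (1 / (T : ℂ)) * ∫ τ in (t - T)..t,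
    x τ * Complex.exp (-(Complex.I * (k : ℂ) * ((2 * Real.pi / T : ℝ) : ℂ) * (τ : ℂ)))

/-- for a `C¹` signal `x`, the phasors satisfy
`d/dt Xₖ(t) = Yₖ(t) − j k ω Xₖ(t)`, where `Y` are the phasors of `ẋ`. -/
theorem hasDerivAt_phasor
    (T : ℝ) (hT : 0 < T) (x : ℝ → ℂ)
    (hx : ContDiff ℝ 1 x) :
    ∀ (k : ℤ) (t : ℝ),
      HasDerivAt (fun s => phasor T x k s)
        (phasor T (deriv x) k t
          - Complex.I * (k : ℂ) * ((2 * Real.pi / T : ℝ) : ℂ) * phasor T x k t) t := by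
  intro k t
  set c : ℂ := -(Complex.I * (k : ℂ) * ((2 * Real.pi / T : ℝ) : ℂ)) with hc
  have hxc : Continuous x := hx.continuous
  have hx'c : Continuous (deriv x) := (hx.iterate_deriv' 0 1).continuous
  set g : ℝ → ℂ := fun τ => x τ * Complex.exp (c * τ) with hg
  have hec : Continuous (fun τ : ℝ => Complex.exp (c * τ)) :=
    Complex.continuous_exp.comp (by continuity)
  have hgc : Continuous g := hxc.mul hec
  set g' : ℝ → ℂ := fun τ => deriv x τ * Complex.exp (c * τ) + c * g τ with hg'def
  have hg'c : Continuous g' := (hx'c.mul hec).add (continuous_const.mul hgc)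
  have hgderiv : ∀ τ : ℝ, HasDerivAt g (g' τ) τ := by
    intro τ
    have h1 : HasDerivAt x (deriv x τ) τ :=
      (hx.differentiable (by norm_num) τ).hasDerivAt
    have h2 : HasDerivAt (fun s : ℝ => Complex.exp (c * s)) (c * Complex.exp (c * τ)) τ := by
      have := (HasDerivAt.comp τ (Complex.hasDerivAt_exp (c * τ))
        ((hasDerivAt_id τ).ofReal_comp.const_mul c))
      simpa [mul_comm, Function.comp_def] using this
    have h3 := h1.mul h2
    have : deriv x τ * Complex.exp (c * τ) + x τ * (c * Complex.exp (c * τ)) = g' τ := by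
      simp only [hg'def, hg]; ring
    exact this ▸ h3
  -- FTC-2 : ∫ g' over window = g t - g (t - T)
  have hftc : (∫ τ in (t - T)..t, g' τ) = g t - g (t - T) :=
    intervalIntegral.integral_eq_sub_of_hasDerivAt (fun τ _ => hgderiv τ)
      (hg'c.intervalIntegrable _ _)
  -- derivative of sliding window integral
  have hint : ∀ s : ℝ, (∫ τ in (s - T)..s, g τ)
      = (∫ τ in (0:ℝ)..s, g τ) - ∫ τ in (0:ℝ)..(s - T), g τ := by
    intro s
    have : ((∫ τ in (0:ℝ)..(s - T), g τ) + ∫ τ in (s - T)..s, g τ)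
        = ∫ τ in (0:ℝ)..s, g τ :=
      intervalIntegral.integral_add_adjacent_intervals
        (hgc.intervalIntegrable 0 (s - T)) (hgc.intervalIntegrable (s - T) s)
    linear_combination this
  have hG : HasDerivAt (fun s => ∫ τ in (s - T)..s, g τ) (g t - g (t - T)) t := by
    have h1 : HasDerivAt (fun s => ∫ τ in (0:ℝ)..s, g τ) (g t) t :=
      (hgc.integral_hasStrictDerivAt 0 t).hasDerivAt
    have h2 : HasDerivAt (fun s => ∫ τ in (0:ℝ)..(s - T), g τ) (g (t - T)) t := by
      have hb : HasDerivAt (fun s : ℝ => s - T) 1 t := by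
        simpa using (hasDerivAt_id t).sub_const T
      have h2' : HasDerivAt (fun u : ℝ => ∫ τ in (0:ℝ)..u, g τ) (g (t - T)) (t - T) :=
        (hgc.integral_hasStrictDerivAt 0 (t - T)).hasDerivAt
      have h2'' : HasDerivAt (fun u : ℝ => ∫ τ in (0:ℝ)..u, g τ) (g (t - T))
          ((fun s : ℝ => s - T) t) := h2'
      simpa [Function.comp_def] using HasDerivAt.scomp t h2'' hb
    have := h1.sub h2
    exact this.congr_of_eventuallyEq (Filter.Eventually.of_forall fun s => (hint s))
  -- rewrite phasor integrands in terms of c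
  have hB : ∀ y : ℝ → ℂ, (∫ τ in (t - T)..t,
      y τ * Complex.exp (-(Complex.I * (k : ℂ) * ((2 * Real.pi / T : ℝ) : ℂ) * (τ : ℂ))))
      = ∫ τ in (t - T)..t, y τ * Complex.exp (c * τ) := by
    intro y
    simp only [hc, neg_mul]
  -- assemble
  have hmain : HasDerivAt (fun s => phasor T x k s)
      ((1 / (T : ℂ)) * (g t - g (t - T))) t := by
    refine (hG.const_mul (1 / (T : ℂ))).congr_of_eventuallyEq
      (Filter.Eventually.of_forall fun s => ?_)
    unfold phasor
    simp only [hg, hc, neg_mul]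
  have hsplit : (∫ τ in (t - T)..t, g' τ)
      = (∫ τ in (t - T)..t, deriv x τ * Complex.exp (c * τ))
        + c * ∫ τ in (t - T)..t, g τ := by
    rw [← intervalIntegral.integral_const_mul]
    exact intervalIntegral.integral_add
      ((hx'c.mul hec).intervalIntegrable _ _)
      ((continuous_const.mul hgc).intervalIntegrable _ _)
  have key : (1 / (T : ℂ)) * (g t - g (t - T))
      = phasor T (deriv x) k t
          - Complex.I * (k : ℂ) * ((2 * Real.pi / T : ℝ) : ℂ) * phasor T x k t := by
    rw [← hftc, hsplit]
    unfold phasor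
    rw [hB (deriv x), hB x]
    rw [hg] at *
    rw [hc]
    ring
  exact key ▸ hmain
end

section
/- Let A, Q be constant complex n×n matrices with Q Hermitian positive definite, and suppose the harmonic Lyapunov equation (𝒜 − 𝒩)* 𝒫 + 𝒫 (𝒜 − 𝒩) + 𝒬 = 0 admits a bounded Hermitian positive-definite solution 𝒫 on ℓ²(ℤ, ℂⁿ) (with 𝒜, 𝒬 the block-diagonal operators of A, Q). Then A is Hurwitz, i.e., all eigenvalues of A have negative real part. -/
open Matrix MeasureTheory
open scoped InnerProductSpace ComplexOrder

/-- if the harmonic Lyapunov equation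
`(𝒜 − 𝒩)* 𝒫 + 𝒫 (𝒜 − 𝒩) + 𝒬 = 0` (stated weakly on the dense family of single-mode
vectors, on which the block-diagonal operators `𝒜 − 𝒩` and `𝒬` act explicitly) admits a
bounded self-adjoint solution `𝒫 ≥ εI` with `ε > 0`, with `Q` Hermitian positive
definite, then `A` is Hurwitz. -/
theorem harmonic_lyapunov_implies_hurwitz
    {n : ℕ} (T : ℝ) (hT : 0 < T)
    (A Q : Matrix (Fin n) (Fin n) ℂ)
    (hQherm : Q.IsHermitian)
    (hQpos : ∀ v : Fin n → ℂ, v ≠ 0 → 0 < (star v) ⬝ᵥ (Q.mulVec v))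
    (P : lp (fun _ : ℤ => EuclideanSpace ℂ (Fin n)) 2 →L[ℂ]
          lp (fun _ : ℤ => EuclideanSpace ℂ (Fin n)) 2)
    (hPsa : ∀ X Y, ⟪P X, Y⟫_ℂ = ⟪X, P Y⟫_ℂ)
    (hPpos : ∃ ε : ℝ, 0 < ε ∧ ∀ X, ε * ‖X‖ ^ 2 ≤ (⟪P X, X⟫_ℂ).re)
    (hLyap : ∀ (m l : ℤ) (v w : EuclideanSpace ℂ (Fin n)),
      ⟪lp.single (E := fun _ : ℤ => EuclideanSpace ℂ (Fin n)) 2 m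
          ((WithLp.equiv 2 _).symm (A.mulVec v)
            - (Complex.I * (m : ℂ) * ((2 * Real.pi / T : ℝ) : ℂ)) • v),
        P (lp.single (E := fun _ : ℤ => EuclideanSpace ℂ (Fin n)) 2 l w)⟫_ℂ
      + ⟪P (lp.single (E := fun _ : ℤ => EuclideanSpace ℂ (Fin n)) 2 m v),
          lp.single (E := fun _ : ℤ => EuclideanSpace ℂ (Fin n)) 2 l
            ((WithLp.equiv 2 _).symm (A.mulVec w)
              - (Complex.I * (l : ℂ) * ((2 * Real.pi / T : ℝ) : ℂ)) • w)⟫_ℂ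
      + ⟪lp.single (E := fun _ : ℤ => EuclideanSpace ℂ (Fin n)) 2 m v, lp.single (E := fun _ : ℤ => EuclideanSpace ℂ (Fin n)) 2 l ((WithLp.equiv 2 _).symm (Q.mulVec w))⟫_ℂ = 0) :
    ∀ μ : ℂ, (∃ v : Fin n → ℂ, v ≠ 0 ∧ A.mulVec v = μ • v) → μ.re < 0 := by
  rintro μ ⟨v, hv, hAv⟩
  obtain ⟨ε, hε, hP⟩ := hPpos
  set v' : EuclideanSpace ℂ (Fin n) := (WithLp.equiv 2 _).symm v with hv'
  set x : lp (fun _ : ℤ => EuclideanSpace ℂ (Fin n)) 2 :=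
    lp.single (E := fun _ : ℤ => EuclideanSpace ℂ (Fin n)) 2 0 v' with hx
  have key := hLyap 0 0 v' v'
  have hAv' : A.mulVec v' = μ • v := hAv
  have hsingle : lp.single (E := fun _ : ℤ => EuclideanSpace ℂ (Fin n)) 2 0
      ((WithLp.equiv 2 _).symm (A.mulVec v')
        - (Complex.I * ((0 : ℤ) : ℂ) * ((2 * Real.pi / T : ℝ) : ℂ)) • v') = μ • x := by
    rw [hAv']
    push_cast
    rw [mul_zero, zero_mul, zero_smul, sub_zero, hx]
    exact lp.single_smul (E := fun _ : ℤ => EuclideanSpace ℂ (Fin n)) 2 (0 : ℤ) μ v'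
  rw [hsingle] at key
  -- inner products
  have hq : ⟪x, lp.single (E := fun _ : ℤ => EuclideanSpace ℂ (Fin n)) 2 0
      ((WithLp.equiv 2 _).symm (Q.mulVec v'))⟫_ℂ = (star v) ⬝ᵥ (Q.mulVec v) := by
    rw [hx, lp.inner_single_left, lp.single_apply]
    simp only [if_pos rfl]
    rw [EuclideanSpace.inner_eq_star_dotProduct]
    rw [Pi.single_eq_same, dotProduct_comm]
    rfl
  rw [hq] at key
  set c : ℂ := ⟪P x, x⟫_ℂ with hc
  have hcconj : ⟪x, P x⟫_ℂ = c := by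
    rw [hc, ← hPsa]
  have key2 : (starRingEnd ℂ) μ * c + μ * c + (star v) ⬝ᵥ (Q.mulVec v) = 0 := by
    rw [inner_smul_left, inner_smul_right, hcconj] at key
    exact key
  have hcreal : c = (c.re : ℂ) := by
    have h1 : (starRingEnd ℂ) c = c := by
      rw [hc]
      rw [inner_conj_symm]
      exact (hPsa x x).symm
    exact (Complex.conj_eq_iff_re.mp h1).symm
  have hqre : 0 < ((star v) ⬝ᵥ (Q.mulVec v)).re := by
    rcases Complex.lt_def.mp (hQpos v hv) with ⟨h1, _⟩
    simpa using h1
  -- x ≠ 0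
  have hx0 : x ≠ 0 := by
    intro h
    apply hv
    have h0 : v' = 0 := by
      have h1 := lp.single_apply_self (E := fun _ : ℤ => EuclideanSpace ℂ (Fin n)) 2 (0 : ℤ) v'
      rw [← hx, h] at h1
      simpa using h1.symm
    exact congrArg (WithLp.equiv 2 _) h0
  have hcre : 0 < c.re := by
    have hnx : 0 < ‖x‖ := norm_pos_iff.mpr hx0
    calc (0:ℝ) < ε * ‖x‖ ^ 2 := mul_pos hε (pow_pos hnx 2)
    _ ≤ c.re := hP x
  -- take real parts in key2
  have hre := congrArg Complex.re key2
  rw [hcreal] at hre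
  simp only [Complex.add_re, Complex.mul_re, Complex.conj_re, Complex.conj_im,
    Complex.ofReal_re, Complex.ofReal_im, Complex.zero_re, mul_zero, neg_mul,
    sub_zero, neg_zero, zero_sub, neg_neg] at hre
  -- hre : μ.re * c.re + μ.re * c.re + q.re = 0 (in some form)
  nlinarith [hre, hcre, hqre]
end
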